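/- Let a, b, c, d ∈ ℂ with ad − bc ≠ 0, let Ω ⊆ ℂ be an open set on which ct + d ≠ 0, and let λ(t) = (at+b)/(ct+d), so λ'(t) = (ad−bc)/(ct+d)². Let q₀ : Ω → ℂ be analytic, and let Q₀ be an analytic function on λ(Ω) satisfying Q₀(λ(t)) = q₀(t)·(ct+d)⁸/(ad−bc)⁴ for all t ∈ Ω. Then for every t ∈ Ω with q₀(t) ≠ 0, one has Q₀(λ(t)) ≠ 0 and (8·Q₀(λ(t))·Q₀''(λ(t)) − 9·(Q₀'(λ(t)))²)² / (4096·Q₀(λ(t))⁵) = (8·q₀(t)·q₀''(t) − 9·(q₀'(t))²)² / (4096·q₀(t)⁵). (That is, 𝓘 := 𝓡²/(4096 q₀⁵) with 𝓡 = 8q₀q₀'' − 9(q₀')² is an absolute invariant.) -/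

import Mathlib

open Complex

lemma key_invariant (q q' q'' u Δ c : ℂ) (hq : q ≠ 0) (hu : u ≠ 0) (hΔ : Δ ≠ 0) :
    (8 * (q * u ^ 8 / Δ ^ 4)
        * ((q'' * u ^ 12 + 18 * c * q' * u ^ 11 + 72 * c ^ 2 * q * u ^ 10) / Δ ^ 6)
      - 9 * ((q' * u ^ 10 + 8 * c * q * u ^ 9) / Δ ^ 5) ^ 2) ^ 2
      / (4096 * (q * u ^ 8 / Δ ^ 4) ^ 5)
    = (8 * q * q'' - 9 * q' ^ 2) ^ 2 / (4096 * q ^ 5) := by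
  have hR : 8 * (q * u ^ 8 / Δ ^ 4)
        * ((q'' * u ^ 12 + 18 * c * q' * u ^ 11 + 72 * c ^ 2 * q * u ^ 10) / Δ ^ 6)
      - 9 * ((q' * u ^ 10 + 8 * c * q * u ^ 9) / Δ ^ 5) ^ 2
      = (8 * q * q'' - 9 * q' ^ 2) * u ^ 20 / Δ ^ 10 := by
    field_simp
    ring
  rw [hR]
  have h1 : (4096 : ℂ) * (q * u ^ 8 / Δ ^ 4) ^ 5 ≠ 0 :=
    mul_ne_zero (by norm_num)
      (pow_ne_zero _ (div_ne_zero (mul_ne_zero hq (pow_ne_zero _ hu)) (pow_ne_zero _ hΔ)))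
  have h2 : (4096 : ℂ) * q ^ 5 ≠ 0 := mul_ne_zero (by norm_num) (pow_ne_zero _ hq)
  rw [div_eq_div_iff h1 h2]
  field_simp

/-- `𝓘 := 𝓡²/(4096·q₀⁵)` with `𝓡 = 8q₀q₀'' − 9(q₀')²` is an absolute invariant of the
Laguerre–Forsyth canonical form under the residual Möbius transformations. -/
theorem I_absolute_invariant
    (a b c d : ℂ) (had : a * d - b * c ≠ 0)
    (Ω : Set ℂ) (hΩ : IsOpen Ω) (hcd : ∀ t ∈ Ω, c * t + d ≠ 0)
    (lam : ℂ → ℂ) (hlam : ∀ t, lam t = (a * t + b) / (c * t + d))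
    (q₀ : ℂ → ℂ) (hq₀ : AnalyticOnNhd ℂ q₀ Ω)
    (Q₀ : ℂ → ℂ) (hQ₀an : AnalyticOnNhd ℂ Q₀ (lam '' Ω))
    (hQ₀ : ∀ t ∈ Ω, Q₀ (lam t) = q₀ t * (c * t + d) ^ 8 / (a * d - b * c) ^ 4) :
    ∀ t ∈ Ω, q₀ t ≠ 0 →
      Q₀ (lam t) ≠ 0 ∧
      (8 * Q₀ (lam t) * iteratedDeriv 2 Q₀ (lam t) - 9 * (deriv Q₀ (lam t)) ^ 2) ^ 2
          / (4096 * Q₀ (lam t) ^ 5) =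
        (8 * q₀ t * iteratedDeriv 2 q₀ t - 9 * (deriv q₀ t) ^ 2) ^ 2
          / (4096 * q₀ t ^ 5) := by
  -- derivative of lam
  have hlamD : ∀ s ∈ Ω, HasDerivAt lam ((a * d - b * c) / (c * s + d) ^ 2) s := by
    intro s hs
    have h1 : HasDerivAt (fun x => a * x + b) a s := by
      simpa using ((hasDerivAt_id s).const_mul a).add_const b
    have h2 : HasDerivAt (fun x => c * x + d) c s := by
      simpa using ((hasDerivAt_id s).const_mul c).add_const d
    have h3 : HasDerivAt (fun y => (a * y + b) / (c * y + d))
        ((a * (c * s + d) - (a * s + b) * c) / (c * s + d) ^ 2) s := h1.fun_div h2 (hcd s hs)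
    have heq : lam = fun x => (a * x + b) / (c * x + d) := funext hlam
    rw [heq]
    convert h3 using 1
    congr 1
    ring
  have hucd : ∀ s ∈ Ω, HasDerivAt (fun x => c * x + d) c s := by
    intro s _
    simpa using ((hasDerivAt_id s).const_mul c).add_const d
  -- first derivative formula, valid on all of Ω
  have hD1 : ∀ s ∈ Ω, deriv Q₀ (lam s) =
      (deriv q₀ s * (c * s + d) ^ 10 + 8 * c * q₀ s * (c * s + d) ^ 9)
        / (a * d - b * c) ^ 5 := by
    intro s hs
    have hus := hcd s hs
    have hQan : AnalyticAt ℂ Q₀ (lam s) := hQ₀an _ ⟨s, hs, rfl⟩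
    have hqan : AnalyticAt ℂ q₀ s := hq₀ s hs
    have hcomp : HasDerivAt (fun x => Q₀ (lam x))
        (deriv Q₀ (lam s) * ((a * d - b * c) / (c * s + d) ^ 2)) s :=
      (hQan.differentiableAt.hasDerivAt).comp s (hlamD s hs)
    have hpow : HasDerivAt (fun x => (c * x + d) ^ 8)
        (8 * (c * s + d) ^ 7 * c) s := by
      simpa using (hucd s hs).fun_pow 8
    have hF : HasDerivAt (fun x => q₀ x * (c * x + d) ^ 8 / (a * d - b * c) ^ 4)
        ((deriv q₀ s * (c * s + d) ^ 8 + q₀ s * (8 * (c * s + d) ^ 7 * c))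
          / (a * d - b * c) ^ 4) s :=
      (hqan.differentiableAt.hasDerivAt.mul hpow).div_const _
    have heq : (fun x => Q₀ (lam x))
        =ᶠ[nhds s] (fun x => q₀ x * (c * x + d) ^ 8 / (a * d - b * c) ^ 4) :=
      Filter.eventuallyEq_of_mem (hΩ.mem_nhds hs) (fun x hx => hQ₀ x hx)
    have hF' : HasDerivAt (fun x => Q₀ (lam x))
        ((deriv q₀ s * (c * s + d) ^ 8 + q₀ s * (8 * (c * s + d) ^ 7 * c))
          / (a * d - b * c) ^ 4) s :=
      hF.congr_of_eventuallyEq heq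
    have huniq := hcomp.unique hF'
    field_simp at huniq ⊢
    linear_combination huniq
  intro t ht hqt
  have hΔ : (a * d - b * c) ≠ 0 := had
  have hu : c * t + d ≠ 0 := hcd t ht
  -- second derivative
  have hQan : AnalyticAt ℂ Q₀ (lam t) := hQ₀an _ ⟨t, ht, rfl⟩
  have hQ'an : AnalyticAt ℂ (deriv Q₀) (lam t) := hQ₀an.deriv _ ⟨t, ht, rfl⟩
  have hq'an : AnalyticAt ℂ (deriv q₀) t := hq₀.deriv t ht
  have hqan : AnalyticAt ℂ q₀ t := hq₀ t ht
  have hD2 : deriv (deriv Q₀) (lam t) =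
      (iteratedDeriv 2 q₀ t * (c * t + d) ^ 12
        + 18 * c * deriv q₀ t * (c * t + d) ^ 11
        + 72 * c ^ 2 * q₀ t * (c * t + d) ^ 10) / (a * d - b * c) ^ 6 := by
    have hcomp : HasDerivAt (fun x => deriv Q₀ (lam x))
        (deriv (deriv Q₀) (lam t) * ((a * d - b * c) / (c * t + d) ^ 2)) t :=
      (hQ'an.differentiableAt.hasDerivAt).comp t (hlamD t ht)
    have hpow10 : HasDerivAt (fun x => (c * x + d) ^ 10)
        (10 * (c * t + d) ^ 9 * c) t := by
      simpa using (hucd t ht).fun_pow 10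
    have hpow9 : HasDerivAt (fun x => (c * x + d) ^ 9)
        (9 * (c * t + d) ^ 8 * c) t := by
      simpa using (hucd t ht).fun_pow 9
    have hg : HasDerivAt
        (fun x => (deriv q₀ x * (c * x + d) ^ 10 + 8 * c * q₀ x * (c * x + d) ^ 9)
          / (a * d - b * c) ^ 5)
        (((deriv (deriv q₀) t * (c * t + d) ^ 10
            + deriv q₀ t * (10 * (c * t + d) ^ 9 * c))
          + ((8 * c * deriv q₀ t) * (c * t + d) ^ 9
            + (8 * c * q₀ t) * (9 * (c * t + d) ^ 8 * c)))
          / (a * d - b * c) ^ 5) t := by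
      have h1 : HasDerivAt (fun x => deriv q₀ x * (c * x + d) ^ 10)
          (deriv (deriv q₀) t * (c * t + d) ^ 10
            + deriv q₀ t * (10 * (c * t + d) ^ 9 * c)) t :=
        hq'an.differentiableAt.hasDerivAt.mul hpow10
      have h2 : HasDerivAt (fun x => 8 * c * q₀ x * (c * x + d) ^ 9)
          ((8 * c * deriv q₀ t) * (c * t + d) ^ 9
            + (8 * c * q₀ t) * (9 * (c * t + d) ^ 8 * c)) t := by
        have := ((hqan.differentiableAt.hasDerivAt.const_mul (8 * c)).fun_mul hpow9)
        convert this using 1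
      exact (h1.add h2).div_const _
    have heq : (fun x => deriv Q₀ (lam x))
        =ᶠ[nhds t] (fun x => (deriv q₀ x * (c * x + d) ^ 10
          + 8 * c * q₀ x * (c * x + d) ^ 9) / (a * d - b * c) ^ 5) :=
      Filter.eventuallyEq_of_mem (hΩ.mem_nhds ht) (fun x hx => hD1 x hx)
    have hg' := hg.congr_of_eventuallyEq heq
    have huniq := hcomp.unique hg'
    have hit : iteratedDeriv 2 q₀ t = deriv (deriv q₀) t := by
      simp [iteratedDeriv_succ, iteratedDeriv_one]
    rw [hit]
    field_simp at huniq ⊢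
    linear_combination huniq
  have hitQ : iteratedDeriv 2 Q₀ (lam t) = deriv (deriv Q₀) (lam t) := by
    simp [iteratedDeriv_succ, iteratedDeriv_one]
  have hQv := hQ₀ t ht
  have hQne : Q₀ (lam t) ≠ 0 := by
    rw [hQv]
    exact div_ne_zero (mul_ne_zero hqt (pow_ne_zero 8 hu)) (pow_ne_zero 4 hΔ)
  refine ⟨hQne, ?_⟩
  rw [hitQ, hD2, hD1 t ht, hQv]
  exact key_invariant (q₀ t) (deriv q₀ t) (iteratedDeriv 2 q₀ t)
    (c * t + d) (a * d - b * c) c hqt hu hΔ
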